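/- Let Ω ≤ Γ be groups and γ ∈ Γ. There exists a finite subset F ⊆ Γ with Ωγ ⊆ FΩ if and only if the index [Ω : Ω ∩ γΩγ⁻¹] is finite. -/

import Mathlib

open Pointwise in
/-- Ωγ ⊆ FΩ for some finite F iff [Ω : Ω ∩ γΩγ⁻¹] < ∞. -/
theorem stmt7 (Γ : Type*) [Group Γ] (Ω : Subgroup Γ) (γ : Γ) :
    (∃ F : Finset Γ, (Ω : Set Γ) * {γ} ⊆ (F : Set Γ) * (Ω : Set Γ)) ↔
      (MulAut.conj γ • Ω).relIndex Ω ≠ 0 := by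
  classical
  set H : Subgroup Ω := (MulAut.conj γ • Ω).subgroupOf Ω with hH
  have memH : ∀ ω : Ω, ω ∈ H ↔ γ⁻¹ * (ω : Γ) * γ ∈ Ω := by
    intro ω
    rw [hH, Subgroup.mem_subgroupOf,
      Subgroup.mem_pointwise_smul_iff_inv_smul_mem]
    simp [MulAut.conj_inv_apply, mul_assoc]
  have key : ∀ ω ω' : Ω,
      (((ω : Γ) * γ : Γ) : Γ ⧸ Ω) = (((ω' : Γ) * γ : Γ) : Γ ⧸ Ω) ↔
        (QuotientGroup.mk ω : Ω ⧸ H) = QuotientGroup.mk ω' := by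
    intro ω ω'
    rw [QuotientGroup.eq, QuotientGroup.eq, memH]
    constructor
    · intro h
      convert h using 1
      push_cast
      group
    · intro h
      convert h using 1
      push_cast
      group
  constructor
  · rintro ⟨F, hF⟩
    have : (MulAut.conj γ • Ω).relIndex Ω = Nat.card (Ω ⧸ H) := rfl
    rw [this]
    rw [Nat.card_ne_zero]
    refine ⟨inferInstance, ?_⟩
    -- injective map into the finite set of cosets of elements of F
    let φ : Ω ⧸ H → Γ ⧸ Ω := Quotient.lift (fun ω : Ω => (((ω : Γ) * γ : Γ) : Γ ⧸ Ω))
      (by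
        intro a b hab
        exact (key a b).mpr (Quotient.sound hab))
    have hφinj : Function.Injective φ := by
      intro q q'
      induction q using Quotient.inductionOn
      induction q' using Quotient.inductionOn
      intro h
      exact (key _ _).mp h
    have hrange : ∀ q : Ω ⧸ H, φ q ∈ F.image (QuotientGroup.mk (s := Ω)) := by
      intro q
      induction q using Quotient.inductionOn with
      | h ω =>
        have : ((ω : Γ) * γ) ∈ (F : Set Γ) * (Ω : Set Γ) := by
          apply hF
          exact Set.mul_mem_mul ω.2 rfl
        obtain ⟨f, hf, o, ho, hfo⟩ := this
        have : φ (Quotient.mk _ ω) = QuotientGroup.mk f := by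
          show (((ω : Γ) * γ : Γ) : Γ ⧸ Ω) = QuotientGroup.mk f
          rw [← hfo, QuotientGroup.eq]
          simpa [mul_assoc] using ho
        rw [this]
        exact Finset.mem_image_of_mem _ hf
    have : Function.Injective
        (fun q : Ω ⧸ H => (⟨φ q, hrange q⟩ :
          (F.image (QuotientGroup.mk (s := Ω)) : Finset (Γ ⧸ Ω)))) := by
      intro a b h
      exact hφinj (congrArg Subtype.val h)
    exact Finite.of_injective _ this
  · intro h
    have hfin : Finite (Ω ⧸ H) := by
      have : (MulAut.conj γ • Ω).relIndex Ω = Nat.card (Ω ⧸ H) := rfl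
      rw [this] at h
      exact (Nat.card_ne_zero.mp h).2
    have := Fintype.ofFinite (Ω ⧸ H)
    refine ⟨Finset.image (fun q : Ω ⧸ H => ((Quotient.out q : Ω) : Γ) * γ) Finset.univ, ?_⟩
    rintro x ⟨ω, hω, y, hy, rfl⟩
    obtain rfl : y = γ := hy
    set w : Ω := ⟨ω, hω⟩
    set r : Ω := Quotient.out (QuotientGroup.mk w : Ω ⧸ H)
    have hr : (QuotientGroup.mk r : Ω ⧸ H) = QuotientGroup.mk w := Quotient.out_eq _
    have hmem : y⁻¹ * ((r⁻¹ * w : Ω) : Γ) * y ∈ Ω := by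
      rw [← memH]
      exact (QuotientGroup.eq.mp hr)
    refine ⟨(r : Γ) * y, ?_, y⁻¹ * ((r⁻¹ * w : Ω) : Γ) * y, hmem, ?_⟩
    · refine Finset.mem_coe.mpr (Finset.mem_image_of_mem _ (Finset.mem_univ _))
    · push_cast
      group
      rfl
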